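/- Monotonic decrease of interference along the geodesic: let H_{21} ∈ ℂ^{M×M} with smallest singular value σ_M strictly less than the second smallest, let v_L be the unit right singular vector for σ_M, let w be a unit vector orthogonal to v_L with ‖H_{21}w‖² > σ_M², and set v(θ) = v_L·u·cos(φ−θ) − w·sin(φ−θ) for fixed φ ∈ (0, π/2] and unimodular u. Then IN(θ) = ‖H_{21} v(θ)‖² is strictly decreasing for θ ∈ [0, φ]. -/

import Mathlib

open Matrix

noncomputable def nsq {M : ℕ} (x : Fin M → ℂ) : ℝ := ∑ i, Complex.normSq (x i)
noncomputable def herm {M : ℕ} (a b : Fin M → ℂ) : ℂ := ∑ i, (starRingEnd ℂ) (a i) * b i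

lemma herm_smul_left {M : ℕ} (c : ℂ) (x y : Fin M → ℂ) :
    herm (c • x) y = (starRingEnd ℂ) c * herm x y := by
  simp [herm, Finset.mul_sum, mul_assoc]

lemma nsq_eq {M : ℕ} (x : Fin M → ℂ) : (nsq x : ℂ) = herm x x := by
  simp [nsq, herm, Complex.normSq_eq_conj_mul_self]

lemma herm_adj {M : ℕ} (B : Matrix (Fin M) (Fin M) ℂ) (x y : Fin M → ℂ) :
    herm (B.mulVec x) y = herm x (Bᴴ.mulVec y) := by
  simp only [herm, Matrix.mulVec, Matrix.conjTranspose_apply, dotProduct, map_sum,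
    _root_.map_mul, Finset.sum_mul, Finset.mul_sum]
  rw [Finset.sum_comm]
  refine Finset.sum_congr rfl fun i _ => Finset.sum_congr rfl fun j _ => ?_
  simp only [starRingEnd_apply]
  ring

lemma herm_mulVec {M : ℕ} (A : Matrix (Fin M) (Fin M) ℂ) (x y : Fin M → ℂ) :
    herm ((Aᴴ * A).mulVec x) y = herm (A.mulVec x) (A.mulVec y) := by
  rw [herm_adj, herm_adj A, Matrix.mulVec_mulVec]
  simp [Matrix.conjTranspose_mul]

lemma nsq_sub {M : ℕ} (a b : ℂ) (x y : Fin M → ℂ) :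
    nsq (a • x - b • y) = Complex.normSq a * nsq x + Complex.normSq b * nsq y
      - 2 * ((starRingEnd ℂ) a * b * herm x y).re := by
  simp only [nsq, herm, Pi.sub_apply, Pi.smul_apply, smul_eq_mul, Finset.mul_sum, Complex.re_sum]
  rw [← Finset.sum_add_distrib, ← Finset.sum_sub_distrib]
  refine Finset.sum_congr rfl fun i _ => ?_
  rw [Complex.normSq_sub, Complex.normSq_mul, Complex.normSq_mul]
  congr 1
  have h : a * x i * (starRingEnd ℂ) (b * y i)
      = (starRingEnd ℂ) ((starRingEnd ℂ) a * b * ((starRingEnd ℂ) (x i) * y i)) := by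
    simp only [_root_.map_mul, Complex.conj_conj]
    ring
  rw [h, Complex.conj_re]

/-- Monotonic decrease of interference along the geodesic: if v_L is the unit right
singular vector of H₂₁ for its smallest singular value σ_M, w is a unit vector
orthogonal to v_L with ‖H₂₁w‖² > σ_M², u is unimodular, φ ∈ (0, π/2], and
v(θ) = v_L·u·cos(φ−θ) − w·sin(φ−θ), then IN(θ) = ‖H₂₁ v(θ)‖² is strictly
decreasing for θ ∈ [0, φ]. -/
theorem stmt_7 {M : ℕ} (H₂₁ : Matrix (Fin M) (Fin M) ℂ) (σM : ℝ) (hσM : 0 ≤ σM)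
    (vL w : Fin M → ℂ) (hvL : nsq vL = 1) (hw : nsq w = 1)
    (heig : (H₂₁.conjTranspose * H₂₁).mulVec vL = (σM ^ 2 : ℂ) • vL)
    (horth : herm vL w = 0) (hgap : σM ^ 2 < nsq (H₂₁.mulVec w))
    (u : ℂ) (hu : ‖u‖ = 1) (φ : ℝ) (hφ0 : 0 < φ) (hφ1 : φ ≤ Real.pi / 2)
    (θ' θ'' : ℝ) (h0 : 0 ≤ θ'') (h1 : θ'' < θ') (h2 : θ' ≤ φ) :
    nsq (H₂₁.mulVec ((u * (Real.cos (φ - θ') : ℂ)) • vL - (Real.sin (φ - θ') : ℂ) • w))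
      < nsq (H₂₁.mulVec ((u * (Real.cos (φ - θ'') : ℂ)) • vL - (Real.sin (φ - θ'') : ℂ) • w)) := by
  have h1 : herm (H₂₁.mulVec vL) (H₂₁.mulVec w) = 0 := by
    rw [← herm_mulVec, heig, herm_smul_left, horth, mul_zero]
  have h2 : nsq (H₂₁.mulVec vL) = σM ^ 2 := by
    have e := nsq_eq (H₂₁.mulVec vL)
    rw [← herm_mulVec, heig, herm_smul_left, ← nsq_eq, hvL] at e
    have e2 : (nsq (H₂₁.mulVec vL) : ℂ) = ((σM ^ 2 : ℝ) : ℂ) := by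
      rw [e]; push_cast; simp [Complex.conj_ofReal]
    exact_mod_cast e2
  have hnu : Complex.normSq u = 1 := by
    rw [← Complex.sq_norm, hu]; norm_num
  have key : ∀ ψ : ℝ,
      nsq (H₂₁.mulVec ((u * (Real.cos ψ : ℂ)) • vL - (Real.sin ψ : ℂ) • w))
        = σM ^ 2 + (nsq (H₂₁.mulVec w) - σM ^ 2) * Real.sin ψ ^ 2 := by
    intro ψ
    rw [Matrix.mulVec_sub, Matrix.mulVec_smul, Matrix.mulVec_smul, nsq_sub, h1, h2]
    simp only [Complex.normSq_mul, Complex.normSq_ofReal, hnu, mul_zero, Complex.zero_re]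
    have := Real.sin_sq_add_cos_sq ψ
    nlinarith [this]
  rw [key, key]
  have hs1 : Real.sin (φ - θ') < Real.sin (φ - θ'') := by
    apply Real.strictMonoOn_sin ⟨by linarith [Real.pi_pos], by linarith⟩
      ⟨by linarith [Real.pi_pos], by linarith⟩ (by linarith)
  have hs0 : 0 ≤ Real.sin (φ - θ') := Real.sin_nonneg_of_nonneg_of_le_pi (by linarith)
    (by linarith [Real.pi_pos])
  have hsq : Real.sin (φ - θ') ^ 2 < Real.sin (φ - θ'') ^ 2 := by nlinarith
  have := mul_lt_mul_of_pos_left hsq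
    (by linarith : (0:ℝ) < nsq (H₂₁.mulVec w) - σM ^ 2)
  linarith
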